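/- In the deamortized reclamation scheme, if each thread has a slab of 6p nodes and performs at least 6 iterations of the reclamation loop per write operation, then every 3p writes a full reclamation phase completes; and if during that phase at most p nodes were protected and at most 2p nodes were installed, then at least 3p nodes are reclaimed during the phase. -/
import Mathlib


/-- In the deamortized reclamation scheme with slabs of `6*p` nodes and at
least `6` reclamation-loop iterations per write, every `3*p` writes a full reclamation
phase (of at most `6*(3*p)` iterations) completes; and if during that phase at most `p`
nodes were protected and at most `2*p` were installed, at least `3*p` nodes are reclaimed. -/
theorem deamortized_reclaim {Node : Type*} [DecidableEq Node] (p : ℕ)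
    (slab installed protected_ : Finset Node)
    (iterations_per_write phase_length : ℕ)
    (hiter : 6 ≤ iterations_per_write)
    (hphase : phase_length ≤ 6 * (3 * p))
    (hslab : slab.card = 6 * p)
    (hprot : protected_.card ≤ p)
    (hinst : installed.card ≤ 2 * p) :
    phase_length ≤ 3 * p * iterations_per_write ∧
      3 * p ≤ (slab \ (installed ∪ protected_)).card := by
  constructor
  · calc phase_length ≤ 6 * (3 * p) := hphase
      _ = 3 * p * 6 := by ring
      _ ≤ 3 * p * iterations_per_write := Nat.mul_le_mul_left _ hiter
  · have h1 : (slab \ (installed ∪ protected_)).card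
        ≥ slab.card - (installed ∪ protected_).card := Finset.le_card_sdiff _ _
    have h2 : (installed ∪ protected_).card ≤ 2 * p + p :=
      le_trans (Finset.card_union_le _ _) (Nat.add_le_add hinst hprot)
    omega
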